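/- Kraus branch of the weak order-1 step: Let V be an N × N complex matrix, Δt ∈ (0,1], Ω := √Δt · [[0, −V†], [V, 0]], U := exp(Ω), and for s ∈ {+1, −1} define M_s : ℂ^N → ℂ^N by M_s ψ := (1/√2) [ (U(ψ ⊕ 0))_top + s · (U(ψ ⊕ 0))_bot ], where (·)_top and (·)_bot denote the upper and lower N-blocks of a vector in ℂ^{2N} = ℂ^N ⊕ ℂ^N. Then there exists C > 0 depending only on ‖V‖ such that for all ψ ∈ ℂ^N and both values of s: ‖ √2 · M_s ψ − ( (I − (Δt/2) V† V) ψ + s √Δt · V ψ ) ‖ ≤ C · Δt^{3/2} · ‖ψ‖. That is, up to normalization, the postselected branch reproduces the Euler–Maruyama update with Rademacher increment ξ = s√Δt. -/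

import Mathlib

set_option maxHeartbeats 1000000


open Matrix

/-- The Euclidean (ℓ²) norm of a finitely-indexed complex vector. -/
noncomputable def euclNorm {ι : Type*} [Fintype ι] (v : ι → ℂ) : ℝ :=
  ‖(WithLp.equiv 2 (ι → ℂ)).symm v‖

/-- The anti-Hermitian interaction generator `Ω := √Δt · [[0, −V†], [V, 0]]`. -/
noncomputable def interactionGen {N : ℕ} (V : Matrix (Fin N) (Fin N) ℂ) (Δt : ℝ) :
    Matrix (Fin N ⊕ Fin N) (Fin N ⊕ Fin N) ℂ :=
  Matrix.fromBlocks 0 (-((Real.sqrt Δt : ℂ) • Vᴴ)) ((Real.sqrt Δt : ℂ) • V) 0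

/-- The Kraus branch `M_s ψ := (1/√2)[(U(ψ⊕0))_top + s·(U(ψ⊕0))_bot]` obtained by
measuring the interaction ancilla in the `X` basis with outcome `s`. -/
noncomputable def krausBranch {N : ℕ} (V : Matrix (Fin N) (Fin N) ℂ) (Δt : ℝ) (s : ℝ)
    (ψ : Fin N → ℂ) : Fin N → ℂ :=
  fun i =>
    ((Real.sqrt 2 : ℂ))⁻¹ *
      (((NormedSpace.exp (interactionGen V Δt)) *ᵥ Sum.elim ψ 0) (Sum.inl i) +
        (s : ℂ) * ((NormedSpace.exp (interactionGen V Δt)) *ᵥ Sum.elim ψ 0) (Sum.inr i))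

attribute [local instance] Matrix.linftyOpNormedRing Matrix.linftyOpNormedAlgebra

theorem exp_tail_bound {𝔸 : Type*} [NormedRing 𝔸] [NormedAlgebra ℂ 𝔸] [CompleteSpace 𝔸] (x : 𝔸) :
    ‖NormedSpace.exp x - ∑ n ∈ Finset.range 3, (n.factorial⁻¹ : ℂ) • x ^ n‖ ≤
      ‖x‖ ^ 3 * Real.exp ‖x‖ := by
  have hs : Summable fun n : ℕ => (n.factorial⁻¹ : ℂ) • x ^ n :=
    NormedSpace.expSeries_summable' (𝕂 := ℂ) x
  have hns : Summable fun n : ℕ => ‖(n.factorial⁻¹ : ℂ) • x ^ n‖ :=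
    NormedSpace.norm_expSeries_summable' (𝕂 := ℂ) x
  simp only [NormedSpace.exp_eq_tsum ℂ]
  rw [show (∑' n : ℕ, (n.factorial⁻¹ : ℂ) • x ^ n) =
      ∑ n ∈ Finset.range 3, (n.factorial⁻¹ : ℂ) • x ^ n +
        ∑' i : ℕ, ((i + 3).factorial⁻¹ : ℂ) • x ^ (i + 3) from
    (Summable.sum_add_tsum_nat_add 3 hs).symm, add_sub_cancel_left]
  have hmaj : ∀ i : ℕ, ‖((i + 3).factorial⁻¹ : ℂ) • x ^ (i + 3)‖ ≤
      ‖x‖ ^ 3 * (‖x‖ ^ i / i.factorial) := by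
    intro i
    rw [norm_smul, norm_inv, Complex.norm_natCast]
    have h2 : ‖x ^ (i + 3)‖ ≤ ‖x‖ ^ (i + 3) := norm_pow_le' x (by omega)
    have h3 : ((i.factorial : ℕ) : ℝ)⁻¹ ≥ 0 := by positivity
    calc (((i + 3).factorial : ℕ) : ℝ)⁻¹ * ‖x ^ (i + 3)‖
        ≤ ((i.factorial : ℕ) : ℝ)⁻¹ * ‖x‖ ^ (i + 3) := by
          apply mul_le_mul _ h2 (norm_nonneg _) h3
          apply inv_anti₀ (by positivity)
          exact_mod_cast Nat.factorial_le (by omega)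
      _ = ‖x‖ ^ 3 * (‖x‖ ^ i / i.factorial) := by rw [pow_add]; ring
  have hmsum : Summable fun i : ℕ => ‖x‖ ^ 3 * (‖x‖ ^ i / i.factorial) :=
    (Real.summable_pow_div_factorial ‖x‖).mul_left _
  calc ‖∑' i : ℕ, ((i + 3).factorial⁻¹ : ℂ) • x ^ (i + 3)‖
      ≤ ∑' i : ℕ, ‖((i + 3).factorial⁻¹ : ℂ) • x ^ (i + 3)‖ :=
        norm_tsum_le_tsum_norm ((summable_nat_add_iff 3).2 hns)
    _ ≤ ∑' i : ℕ, ‖x‖ ^ 3 * (‖x‖ ^ i / i.factorial) :=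
        Summable.tsum_le_tsum hmaj ((summable_nat_add_iff 3).2 hns) hmsum
    _ = ‖x‖ ^ 3 * Real.exp ‖x‖ := by
        rw [tsum_mul_left, Real.exp_eq_exp_ℝ, NormedSpace.exp_eq_tsum_div]

section euclAux
variable {ι : Type*} [Fintype ι]

theorem euclNorm_eq (v : ι → ℂ) : euclNorm v = Real.sqrt (∑ i, ‖v i‖ ^ 2) :=
  EuclideanSpace.norm_eq _

theorem euclNorm_nonneg (v : ι → ℂ) : 0 ≤ euclNorm v := norm_nonneg _

theorem euclNorm_add_le (u v : ι → ℂ) : euclNorm (u + v) ≤ euclNorm u + euclNorm v :=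
  norm_add_le ((WithLp.equiv 2 (ι → ℂ)).symm u) ((WithLp.equiv 2 (ι → ℂ)).symm v)

theorem euclNorm_smul (c : ℂ) (v : ι → ℂ) : euclNorm (c • v) = ‖c‖ * euclNorm v :=
  norm_smul c ((WithLp.equiv 2 (ι → ℂ)).symm v)

theorem coord_le_euclNorm (v : ι → ℂ) (i : ι) : ‖v i‖ ≤ euclNorm v := by
  rw [euclNorm_eq]
  have h1 : ‖v i‖ ^ 2 ≤ ∑ j, ‖v j‖ ^ 2 :=
    Finset.single_le_sum (f := fun j => ‖v j‖ ^ 2) (fun j _ => by positivity)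
      (Finset.mem_univ i)
  calc ‖v i‖ = Real.sqrt (‖v i‖ ^ 2) := (Real.sqrt_sq (norm_nonneg _)).symm
    _ ≤ _ := Real.sqrt_le_sqrt h1

theorem euclNorm_le_of_forall_le {v : ι → ℂ} {M : ℝ} (hM : 0 ≤ M) (h : ∀ i, ‖v i‖ ≤ M) :
    euclNorm v ≤ Real.sqrt (Fintype.card ι) * M := by
  rw [euclNorm_eq]
  have h1 : ∑ i, ‖v i‖ ^ 2 ≤ (Fintype.card ι : ℝ) * M ^ 2 := by
    calc ∑ i, ‖v i‖ ^ 2 ≤ ∑ _i : ι, M ^ 2 :=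
          Finset.sum_le_sum fun i _ => pow_le_pow_left₀ (norm_nonneg _) (h i) 2
      _ = (Fintype.card ι : ℝ) * M ^ 2 := by simp [Finset.sum_const, nsmul_eq_mul]
  calc Real.sqrt (∑ i, ‖v i‖ ^ 2) ≤ Real.sqrt ((Fintype.card ι : ℝ) * M ^ 2) :=
        Real.sqrt_le_sqrt h1
    _ = Real.sqrt (Fintype.card ι) * M := by
        rw [Real.sqrt_mul (by positivity), Real.sqrt_sq hM]

end euclAux

/-- **Kraus branch of the weak order-1 step.** Up to normalization, the
postselected branch `M_s` reproduces the Euler–Maruyama update with Rademacher increment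
`ξ = s√Δt`, with one-step error `O(Δt^{3/2})`. -/
theorem kraus_branch_weak1 (N : ℕ) (V : Matrix (Fin N) (Fin N) ℂ) :
    ∃ C > 0, ∀ Δt : ℝ, 0 < Δt → Δt ≤ 1 → ∀ ψ : Fin N → ℂ, ∀ s : ℝ, (s = 1 ∨ s = -1) →
      euclNorm
        ((Real.sqrt 2 : ℂ) • krausBranch V Δt s ψ -
          ((((1 : Matrix (Fin N) (Fin N) ℂ) - ((Δt / 2 : ℝ) : ℂ) • (Vᴴ * V))) *ᵥ ψ +
            ((s * Real.sqrt Δt : ℝ) : ℂ) • (V *ᵥ ψ))) ≤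
        C * Δt ^ ((3 : ℝ) / 2) * euclNorm ψ := by
  classical
  set A₀ : Matrix (Fin N ⊕ Fin N) (Fin N ⊕ Fin N) ℂ := Matrix.fromBlocks 0 (-Vᴴ) V 0 with hA₀
  set K : ℝ := ‖A₀‖ with hK
  have hKnn : 0 ≤ K := norm_nonneg _
  refine ⟨2 * Real.sqrt N * (K ^ 3 * Real.exp K) + 1, by positivity, ?_⟩
  intro Δt hΔt hΔt1 ψ s hsval
  have hc0 : 0 ≤ Real.sqrt Δt := Real.sqrt_nonneg _
  have hc1 : Real.sqrt Δt ≤ 1 := Real.sqrt_le_one.2 hΔt1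
  set Ω := interactionGen V Δt with hΩ
  have hΩA : Ω = ((Real.sqrt Δt : ℝ) : ℂ) • A₀ := by
    rw [hΩ, hA₀, interactionGen, Matrix.fromBlocks_smul]
    simp
  have hΩnorm : ‖Ω‖ = Real.sqrt Δt * K := by
    rw [hΩA, norm_smul, hK, Complex.norm_real, Real.norm_eq_abs, abs_of_nonneg hc0]
  set U := NormedSpace.exp Ω with hU
  set T := U - (1 + Ω + (2⁻¹ : ℂ) • (Ω * Ω)) with hT
  have hsum3 : ∑ n ∈ Finset.range 3, (n.factorial⁻¹ : ℂ) • Ω ^ n =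
      1 + Ω + (2⁻¹ : ℂ) • (Ω * Ω) := by
    rw [Finset.sum_range_succ, Finset.sum_range_succ, Finset.sum_range_one]
    norm_num [pow_two]
  have hTnorm : ‖T‖ ≤ ‖Ω‖ ^ 3 * Real.exp ‖Ω‖ := by
    rw [hT, ← hsum3]; exact exp_tail_bound Ω
  -- vector computations
  set x : (Fin N ⊕ Fin N) → ℂ := Sum.elim ψ 0 with hx
  have hΩx : Ω *ᵥ x = Sum.elim (0 : Fin N → ℂ) (((Real.sqrt Δt : ℝ) : ℂ) • (V *ᵥ ψ)) := by
    rw [hΩ, hx, interactionGen, Matrix.fromBlocks_mulVec]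
    simp [Matrix.smul_mulVec]
  have hΩ2x : Ω *ᵥ (Sum.elim (0 : Fin N → ℂ) (((Real.sqrt Δt : ℝ) : ℂ) • (V *ᵥ ψ))) =
      Sum.elim (-(((Δt : ℝ) : ℂ) • (Vᴴ *ᵥ (V *ᵥ ψ)))) (0 : Fin N → ℂ) := by
    rw [hΩ, interactionGen, Matrix.fromBlocks_mulVec]
    have hcc : ((Real.sqrt Δt : ℝ) : ℂ) * ((Real.sqrt Δt : ℝ) : ℂ) = ((Δt : ℝ) : ℂ) := by
      rw [← Complex.ofReal_mul, Real.mul_self_sqrt hΔt.le]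
    simp [Matrix.smul_mulVec, Matrix.mulVec_smul, Matrix.neg_mulVec, smul_smul, hcc,
      Real.mul_self_sqrt hΔt.le]
  have hs1 : ‖(s : ℂ)‖ = 1 := by
    rcases hsval with h | h <;> simp [h]
  have hTx : T *ᵥ x = U *ᵥ x -
      (x + Sum.elim (0 : Fin N → ℂ) (((Real.sqrt Δt : ℝ) : ℂ) • (V *ᵥ ψ)) +
        (2⁻¹ : ℂ) • Sum.elim (-(((Δt : ℝ) : ℂ) • (Vᴴ *ᵥ (V *ᵥ ψ)))) (0 : Fin N → ℂ)) := by
    rw [hT, Matrix.sub_mulVec, Matrix.add_mulVec, Matrix.add_mulVec, Matrix.one_mulVec,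
      Matrix.smul_mulVec, ← Matrix.mulVec_mulVec, hΩx, hΩ2x]
  -- the difference vector equals the Taylor remainder applied to x
  have hd : ((Real.sqrt 2 : ℂ) • krausBranch V Δt s ψ -
        ((((1 : Matrix (Fin N) (Fin N) ℂ) - ((Δt / 2 : ℝ) : ℂ) • (Vᴴ * V))) *ᵥ ψ +
          ((s * Real.sqrt Δt : ℝ) : ℂ) • (V *ᵥ ψ))) =
      (fun i => (T *ᵥ x) (Sum.inl i)) + (s : ℂ) • (fun i => (T *ᵥ x) (Sum.inr i)) := by
    have h2 : (Real.sqrt 2 : ℂ) ≠ 0 := by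
      rw [Complex.ofReal_ne_zero]
      positivity
    funext i
    simp only [Pi.add_apply, Pi.sub_apply, Pi.smul_apply, smul_eq_mul, krausBranch]
    rw [← hΩ, ← hx, ← hU, hTx]
    simp only [Pi.sub_apply, Pi.add_apply, Pi.smul_apply, Sum.elim_inl, Sum.elim_inr,
      Pi.zero_apply, Pi.neg_apply, smul_eq_mul, hx, Matrix.sub_mulVec, Matrix.one_mulVec,
      Matrix.smul_mulVec, Matrix.mulVec_mulVec, Complex.ofReal_mul, Complex.ofReal_div]
    field_simp
    push_cast
    ring
  rw [hd]
  -- norm bounds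
  have hxball : ∀ j, ‖(T *ᵥ x) j‖ ≤ ‖T‖ * euclNorm ψ := by
    intro j
    have h1 : ‖(T *ᵥ x) j‖ ≤ ‖T *ᵥ x‖ := norm_le_pi_norm _ j
    have h2 : ‖T *ᵥ x‖ ≤ ‖T‖ * ‖x‖ := Matrix.linfty_opNorm_mulVec _ _
    have h3 : ‖x‖ ≤ euclNorm ψ := by
      rw [pi_norm_le_iff_of_nonneg (euclNorm_nonneg ψ)]
      intro j
      rcases j with j | j
      · exact coord_le_euclNorm ψ j
      · simp [hx, euclNorm_nonneg ψ]
    calc ‖(T *ᵥ x) j‖ ≤ ‖T‖ * ‖x‖ := h1.trans h2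
      _ ≤ ‖T‖ * euclNorm ψ := mul_le_mul_of_nonneg_left h3 (norm_nonneg _)
  have hMnn : 0 ≤ ‖T‖ * euclNorm ψ := mul_nonneg (norm_nonneg _) (euclNorm_nonneg ψ)
  have hcard : ((Fintype.card (Fin N) : ℕ) : ℝ) = (N : ℝ) := by simp
  have ha : euclNorm (fun i => (T *ᵥ x) (Sum.inl i)) ≤ Real.sqrt N * (‖T‖ * euclNorm ψ) := by
    have := euclNorm_le_of_forall_le (v := fun i : Fin N => (T *ᵥ x) (Sum.inl i)) hMnn
      (fun i => hxball _)
    rwa [hcard] at this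
  have hb : euclNorm (fun i => (T *ᵥ x) (Sum.inr i)) ≤ Real.sqrt N * (‖T‖ * euclNorm ψ) := by
    have := euclNorm_le_of_forall_le (v := fun i : Fin N => (T *ᵥ x) (Sum.inr i)) hMnn
      (fun i => hxball _)
    rwa [hcard] at this
  have htotal : euclNorm ((fun i => (T *ᵥ x) (Sum.inl i)) +
      (s : ℂ) • (fun i => (T *ᵥ x) (Sum.inr i))) ≤
      2 * Real.sqrt N * (‖T‖ * euclNorm ψ) := by
    calc euclNorm _ ≤ euclNorm (fun i => (T *ᵥ x) (Sum.inl i)) +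
          euclNorm ((s : ℂ) • (fun i => (T *ᵥ x) (Sum.inr i))) := euclNorm_add_le _ _
      _ = euclNorm (fun i => (T *ᵥ x) (Sum.inl i)) +
          euclNorm (fun i => (T *ᵥ x) (Sum.inr i)) := by rw [euclNorm_smul, hs1, one_mul]
      _ ≤ _ := by linarith
  -- bound ‖T‖ by Δt^(3/2) * (K^3 * exp K)
  have hpow32 : Real.sqrt Δt ^ 3 = Δt ^ ((3 : ℝ) / 2) := by
    rw [Real.sqrt_eq_rpow, ← Real.rpow_natCast (Δt ^ ((1:ℝ)/2)) 3, ← Real.rpow_mul hΔt.le]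
    norm_num
  have hTfinal : ‖T‖ ≤ Δt ^ ((3 : ℝ) / 2) * (K ^ 3 * Real.exp K) := by
    have h1 : ‖Ω‖ ^ 3 * Real.exp ‖Ω‖ ≤ Real.sqrt Δt ^ 3 * (K ^ 3 * Real.exp K) := by
      rw [hΩnorm, mul_pow]
      have he : Real.exp (Real.sqrt Δt * K) ≤ Real.exp K := by
        apply Real.exp_le_exp.2
        nlinarith
      calc Real.sqrt Δt ^ 3 * K ^ 3 * Real.exp (Real.sqrt Δt * K)
          ≤ Real.sqrt Δt ^ 3 * K ^ 3 * Real.exp K :=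
            mul_le_mul_of_nonneg_left he (by positivity)
        _ = Real.sqrt Δt ^ 3 * (K ^ 3 * Real.exp K) := by ring
    rw [← hpow32]
    exact hTnorm.trans h1
  have hψnn := euclNorm_nonneg ψ
  calc euclNorm _ ≤ 2 * Real.sqrt N * (‖T‖ * euclNorm ψ) := htotal
    _ ≤ 2 * Real.sqrt N * ((Δt ^ ((3 : ℝ) / 2) * (K ^ 3 * Real.exp K)) * euclNorm ψ) := by
        apply mul_le_mul_of_nonneg_left _ (by positivity)
        exact mul_le_mul_of_nonneg_right hTfinal hψnn
    _ ≤ (2 * Real.sqrt N * (K ^ 3 * Real.exp K) + 1) * Δt ^ ((3 : ℝ) / 2) * euclNorm ψ := by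
        have hΔp : (0:ℝ) ≤ Δt ^ ((3 : ℝ) / 2) := Real.rpow_nonneg hΔt.le _
        have hrt : (0:ℝ) ≤ Real.sqrt N := Real.sqrt_nonneg _
        nlinarith [mul_nonneg hΔp hψnn, Real.exp_pos K, pow_nonneg hKnn 3,
          mul_nonneg (mul_nonneg hΔp hψnn) (mul_nonneg (pow_nonneg hKnn 3) (Real.exp_pos K).le)]
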